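/- The total winding angle on the square root spiral between the square number m² and the square number (m+3)², which lies one wind later on the same of the three square-number spiral arms, tends to 6 radians: lim_{m→∞} Σ_{n=m²+1}^{(m+3)²} arctan(1/√n) = 6; consequently the angle between the square numbers on two successive winds strives for 2π − 6 (i.e. 360° − 3·(360°/π)). -/

import Mathlib

open Filter Finset Real


lemma aux_arctan_lower {x : ℝ} (hx : 0 ≤ x) : x / (1 + x ^ 2) ≤ Real.arctan x := by
  have key : Monotone (fun y : ℝ => Real.arctan y - y / (1 + y ^ 2)) := by
    have hd : ∀ y : ℝ, HasDerivAt (fun y : ℝ => Real.arctan y - y / (1 + y ^ 2))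
        (2 * y ^ 2 / (1 + y ^ 2) ^ 2) y := by
      intro y
      have h1 : (1 : ℝ) + y ^ 2 ≠ 0 := by positivity
      have h2 : HasDerivAt (fun y : ℝ => y / (1 + y ^ 2))
          ((1 * (1 + y ^ 2) - y * (0 + 2 * y ^ 1)) / (1 + y ^ 2) ^ 2) y :=
        (hasDerivAt_id y).div ((hasDerivAt_const y 1).add (hasDerivAt_pow 2 y)) h1
      have := (Real.hasDerivAt_arctan y).sub h2
      refine this.congr_deriv ?_
      rw [div_sub_div _ _ h1 (pow_ne_zero 2 h1), div_eq_div_iff (by positivity) (by positivity)]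
      ring
    apply monotone_of_deriv_nonneg
    · exact fun y => (hd y).differentiableAt
    · intro y
      rw [(hd y).deriv]
      positivity
  have h0 := key hx
  simpa using h0

lemma aux_arctan_upper {x : ℝ} (hx : 0 ≤ x) : Real.arctan x ≤ x := by
  have key : Monotone (fun y : ℝ => y - Real.arctan y) := by
    have hd : ∀ y : ℝ, HasDerivAt (fun y : ℝ => y - Real.arctan y)
        (1 - 1 / (1 + y ^ 2)) y := fun y => (hasDerivAt_id y).sub (Real.hasDerivAt_arctan y)
    apply monotone_of_deriv_nonneg
    · exact fun y => (hd y).differentiableAt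
    · intro y
      rw [(hd y).deriv]
      have h1 : (0:ℝ) < 1 + y ^ 2 := by positivity
      have : 1 / (1 + y ^ 2) ≤ 1 := by
        rw [div_le_one h1]; nlinarith [sq_nonneg y]
      linarith
  have h0 := key hx
  simpa using h0



lemma aux_upper_term {x : ℝ} (hx : 0 ≤ x) :
    Real.arctan (1 / Real.sqrt (x + 1)) ≤ 2 * (Real.sqrt (x + 1) - Real.sqrt x) := by
  have ht : 0 < Real.sqrt (x + 1) := Real.sqrt_pos.2 (by linarith)
  have hs : 0 ≤ Real.sqrt x := Real.sqrt_nonneg x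
  have hst : Real.sqrt x ≤ Real.sqrt (x + 1) := Real.sqrt_le_sqrt (by linarith)
  have hsq : Real.sqrt (x + 1) ^ 2 = x + 1 := Real.sq_sqrt (by linarith)
  have hsq' : Real.sqrt x ^ 2 = x := Real.sq_sqrt hx
  have h1 : Real.arctan (1 / Real.sqrt (x + 1)) ≤ 1 / Real.sqrt (x + 1) :=
    aux_arctan_upper (by positivity)
  have h2 : 1 / Real.sqrt (x + 1) ≤ 2 * (Real.sqrt (x + 1) - Real.sqrt x) := by
    rw [div_le_iff₀ ht]
    nlinarith [sq_nonneg (Real.sqrt (x + 1) - Real.sqrt x)]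
  linarith

lemma aux_lower_term {n m : ℕ} (hm : 1 ≤ m) (hn : m ^ 2 < n) :
    2 * (Real.sqrt ((n : ℝ) + 1) - Real.sqrt n) - 1 / (m : ℝ) ^ 3
      ≤ Real.arctan (1 / Real.sqrt n) := by
  set s := Real.sqrt (n : ℝ) with hs_def
  set t := Real.sqrt ((n : ℝ) + 1) with ht_def
  have hm1 : (1 : ℝ) ≤ (m : ℝ) := by exact_mod_cast hm
  have hmn : ((m : ℝ)) ^ 2 ≤ (n : ℝ) := by
    have : (m ^ 2 : ℕ) ≤ n := le_of_lt hn
    exact_mod_cast this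
  have hs0 : (0:ℝ) < s := Real.sqrt_pos.2 (by nlinarith)
  have hsq : s ^ 2 = (n : ℝ) := Real.sq_sqrt (by nlinarith)
  have htq : t ^ 2 = (n : ℝ) + 1 := Real.sq_sqrt (by nlinarith)
  have hst : s ≤ t := Real.sqrt_le_sqrt (by linarith)
  have hms : (m : ℝ) ≤ s := by
    rw [hs_def]
    rw [show ((m:ℝ)) = Real.sqrt ((m:ℝ)^2) by rw [Real.sqrt_sq (by linarith)]]
    exact Real.sqrt_le_sqrt hmn
  -- arctan (1/s) ≥ (1/s)/(1+(1/s)^2) = s / t^2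
  have harct : s / t ^ 2 ≤ Real.arctan (1 / s) := by
    have := aux_arctan_lower (x := 1 / s) (by positivity)
    have heq : (1 / s) / (1 + (1 / s) ^ 2) = s / t ^ 2 := by
      rw [htq, ← hsq]; field_simp
    linarith [heq ▸ this]
  -- 2 (t - s) ≤ 1 / s
  have h2ts : 2 * (t - s) ≤ 1 / s := by
    rw [le_div_iff₀ hs0]
    nlinarith [sq_nonneg (t - s)]
  -- 1/s - s/t^2 = 1/(s t^2) ≤ 1/m^3
  have ht0 : (0:ℝ) < t := lt_of_lt_of_le hs0 hst
  have hid : 1 / s - s / t ^ 2 = 1 / (s * t ^ 2) := by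
    field_simp; nlinarith
  have hb : 1 / (s * t ^ 2) ≤ 1 / (m : ℝ) ^ 3 := by
    apply one_div_le_one_div_of_le (by positivity)
    nlinarith
  linarith



lemma aux_sum_eq (m : ℕ) :
    ∑ n ∈ (Finset.Icc (m ^ 2 + 1) ((m + 3) ^ 2) : Finset ℕ), Real.arctan (1 / Real.sqrt n)
      = ∑ i ∈ Finset.range (6 * m + 9), Real.arctan (1 / Real.sqrt ((m ^ 2 + 1 + i : ℕ))) := by
  rw [← Finset.Ico_add_one_right_eq_Icc, Finset.sum_Ico_eq_sum_range]
  congr 1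
  congr 1
  have hx : (m+3)^2 = m^2+6*m+9 := by ring
  omega

lemma aux_sum_upper (m : ℕ) :
    ∑ n ∈ (Finset.Icc (m ^ 2 + 1) ((m + 3) ^ 2) : Finset ℕ), Real.arctan (1 / Real.sqrt n) ≤ 6 := by
  rw [aux_sum_eq]
  have h : ∑ i ∈ Finset.range (6 * m + 9), Real.arctan (1 / Real.sqrt ((m ^ 2 + 1 + i : ℕ)))
      ≤ ∑ i ∈ Finset.range (6 * m + 9),
        ((fun j : ℕ => 2 * Real.sqrt ((m : ℝ) ^ 2 + j)) (i + 1)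
          - (fun j : ℕ => 2 * Real.sqrt ((m : ℝ) ^ 2 + j)) i) := by
    apply Finset.sum_le_sum
    intro i _
    have := aux_upper_term (x := (m : ℝ) ^ 2 + i) (by positivity)
    have e1 : ((m ^ 2 + 1 + i : ℕ) : ℝ) = (m : ℝ) ^ 2 + i + 1 := by push_cast; ring
    have e2 : ((m : ℝ) ^ 2 + ((i : ℕ) + 1 : ℕ)) = (m : ℝ) ^ 2 + i + 1 := by push_cast; ring
    simp only [e1, e2]
    linarith
  rw [Finset.sum_range_sub (fun j : ℕ => 2 * Real.sqrt ((m : ℝ) ^ 2 + j))] at h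
  have e3 : ((m : ℝ) ^ 2 + ((6 * m + 9 : ℕ) : ℝ)) = ((m : ℝ) + 3) ^ 2 := by push_cast; ring
  have e4 : Real.sqrt (((m : ℝ) + 3) ^ 2) = (m : ℝ) + 3 := Real.sqrt_sq (by positivity)
  have e5 : Real.sqrt ((m : ℝ) ^ 2 + (0 : ℕ)) = (m : ℝ) := by
    simp [Real.sqrt_sq (by positivity : (0:ℝ) ≤ (m:ℝ))]
  simp only [e3, e4, e5] at h
  linarith

lemma aux_sum_lower (m : ℕ) (hm : 1 ≤ m) :
    6 - 16 / (m : ℝ) ≤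
      ∑ n ∈ (Finset.Icc (m ^ 2 + 1) ((m + 3) ^ 2) : Finset ℕ), Real.arctan (1 / Real.sqrt n) := by
  have hm1 : (1 : ℝ) ≤ (m : ℝ) := by exact_mod_cast hm
  have hm0 : (0 : ℝ) < (m : ℝ) := by linarith
  rw [aux_sum_eq]
  have h : ∑ i ∈ Finset.range (6 * m + 9),
        (((fun j : ℕ => 2 * Real.sqrt ((m : ℝ) ^ 2 + 1 + j)) (i + 1)
          - (fun j : ℕ => 2 * Real.sqrt ((m : ℝ) ^ 2 + 1 + j)) i) - 1 / (m : ℝ) ^ 3)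
      ≤ ∑ i ∈ Finset.range (6 * m + 9), Real.arctan (1 / Real.sqrt ((m ^ 2 + 1 + i : ℕ))) := by
    apply Finset.sum_le_sum
    intro i _
    have hn : m ^ 2 < m ^ 2 + 1 + i := by omega
    have := aux_lower_term (n := m ^ 2 + 1 + i) (m := m) hm hn
    have e1 : ((m ^ 2 + 1 + i : ℕ) : ℝ) = (m : ℝ) ^ 2 + 1 + i := by push_cast; ring
    have e2 : ((m : ℝ) ^ 2 + 1 + ((i : ℕ) + 1 : ℕ)) = (m : ℝ) ^ 2 + 1 + i + 1 := by
      push_cast; ring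
    simp only [e1, e2] at this ⊢
    linarith
  rw [Finset.sum_sub_distrib, Finset.sum_const, Finset.card_range,
    Finset.sum_range_sub (fun j : ℕ => 2 * Real.sqrt ((m : ℝ) ^ 2 + 1 + j))] at h
  have key : 6 - 16 / (m : ℝ) ≤
      (2 * Real.sqrt ((m : ℝ) ^ 2 + 1 + ((6 * m + 9 : ℕ) : ℝ))
        - 2 * Real.sqrt ((m : ℝ) ^ 2 + 1 + ((0 : ℕ) : ℝ)))
      - (6 * m + 9 : ℕ) • (1 / (m : ℝ) ^ 3) := by
    have e3 : ((m : ℝ) ^ 2 + 1 + ((6 * m + 9 : ℕ) : ℝ)) = ((m : ℝ) + 3) ^ 2 + 1 := by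
      push_cast; ring
    have h4 : (m : ℝ) + 3 ≤ Real.sqrt (((m : ℝ) + 3) ^ 2 + 1) := by
      have := Real.sqrt_le_sqrt (show ((m:ℝ)+3)^2 ≤ ((m:ℝ)+3)^2 + 1 by norm_num)
      rwa [Real.sqrt_sq (by positivity : (0:ℝ) ≤ (m:ℝ)+3)] at this
    have h5 : Real.sqrt ((m : ℝ) ^ 2 + 1 + ((0:ℕ):ℝ)) ≤ (m : ℝ) + 1 / (2 * m) := by
      rw [show ((m:ℝ)^2 + 1 + ((0:ℕ):ℝ)) = (m:ℝ)^2+1 by push_cast; ring]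
      have : ((m:ℝ)^2 + 1) ≤ ((m:ℝ) + 1/(2*m))^2 := by
        have e : ((m:ℝ) + 1/(2*m))^2 = (m:ℝ)^2 + 1 + 1/(4*m^2) := by
          field_simp
          ring
        have hp : (0:ℝ) < 1/(4*(m:ℝ)^2) := by positivity
        rw [e]; linarith
      calc Real.sqrt ((m:ℝ)^2+1) ≤ Real.sqrt (((m:ℝ) + 1/(2*m))^2) := Real.sqrt_le_sqrt this
        _ = (m:ℝ) + 1/(2*m) := Real.sqrt_sq (by positivity)
    have h6 : ((6 * m + 9 : ℕ) : ℝ) * (1 / (m : ℝ) ^ 3) ≤ 15 / (m : ℝ) := by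
      push_cast
      rw [mul_one_div, div_le_div_iff₀ (by positivity) hm0]
      nlinarith
    rw [nsmul_eq_mul, e3]
    have h9 : 16/(m:ℝ) = 2*(1/(2*(m:ℝ))) + 15/(m:ℝ) := by
      field_simp
      ring
    have h7 : 1 / (2 * (m:ℝ)) ≤ 1 / (m:ℝ) := by
      apply one_div_le_one_div_of_le hm0; linarith
    linarith
  linarith


/-- The total winding angle between the square number `m²` and the square
number `(m+3)²` (one wind later, on the same square-number spiral arm) tends
to `6` radians; consequently the angle between the square numbers on two
successive winds strives for `2π − 6`. -/
theorem angle_between_squares_on_successive_winds :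
    Tendsto
      (fun m : ℕ =>
        ∑ n ∈ (Finset.Icc (m ^ 2 + 1) ((m + 3) ^ 2) : Finset ℕ),
          Real.arctan (1 / Real.sqrt n))
      atTop (nhds 6) ∧
    Tendsto
      (fun m : ℕ =>
        2 * Real.pi -
          ∑ n ∈ (Finset.Icc (m ^ 2 + 1) ((m + 3) ^ 2) : Finset ℕ),
            Real.arctan (1 / Real.sqrt n))
      atTop (nhds (2 * Real.pi - 6)) := by
  have hmain : Tendsto
      (fun m : ℕ =>
        ∑ n ∈ (Finset.Icc (m ^ 2 + 1) ((m + 3) ^ 2) : Finset ℕ),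
          Real.arctan (1 / Real.sqrt n))
      atTop (nhds 6) := by
    have hlow : Tendsto (fun m : ℕ => 6 - 16 / (m : ℝ)) atTop (nhds 6) := by
      have h0 : Tendsto (fun m : ℕ => 16 / (m : ℝ)) atTop (nhds 0) :=
        tendsto_const_nhds.div_atTop tendsto_natCast_atTop_atTop
      have h1 : Tendsto (fun m : ℕ => (6:ℝ) - 16 / (m : ℝ)) atTop (nhds (6 - 0)) :=
        Tendsto.sub tendsto_const_nhds h0
      simpa using h1
    apply tendsto_of_tendsto_of_tendsto_of_le_of_le' hlow tendsto_const_nhds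
    · filter_upwards [eventually_ge_atTop 1] with m hm
      exact aux_sum_lower m hm
    · filter_upwards with m
      exact aux_sum_upper m
  exact ⟨hmain, tendsto_const_nhds.sub hmain⟩
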